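/- Let A be an index type, d ≥ 1 a natural number, and a : (A →₀ ℕ) → ℝ a superexponential d-regular admissible positive function; set A_d = (∑_α a_α^{−d})^{1/2}. Let R > 0 and (φ_n)_{n∈ℕ} be complex numbers such that ∑_n |φ_n| r^n < ∞ for every 0 < r < R. Let f : (A →₀ ℕ) → ℂ with ‖f‖_{p₀} < ∞ for some p₀ ∈ ℕ and with |f_0| < R / A_d. Then there exists p ∈ ℕ such that ∑_{n∈ℕ} |φ_n| · ‖f^{*n}‖_p < ∞ (so the series ∑_n φ_n f^{*n} converges absolutely in the weighted ℓ² norm ‖·‖_p). -/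

import Mathlib

open scoped ENNReal

/-- The convolution (Cauchy product) of two families indexed by the free commutative
monoid `A →₀ ℕ`, i.e. multiplication in `MvPowerSeries A ℂ`. -/
noncomputable def conv {A : Type*} [DecidableEq A] (f g : (A →₀ ℕ) → ℂ) : (A →₀ ℕ) → ℂ :=
  fun γ => ∑ x ∈ Finset.HasAntidiagonal.antidiagonal γ, f x.1 * g x.2

/-- The `n`-th convolution power: `f^{*0} = 1` (the indicator of `α = 0`) and
`f^{*(n+1)} = f * f^{*n}`. -/
noncomputable def convPow {A : Type*} [DecidableEq A] (f : (A →₀ ℕ) → ℂ) : ℕ → (A →₀ ℕ) → ℂ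
  | 0 => fun γ => if γ = 0 then 1 else 0
  | n + 1 => conv f (convPow f n)

/-- The squared weighted `ℓ²`-norm `‖f‖_p² = ∑' α, |f α|² a α ^ (-p)`, as a sum in `[0,∞]`. -/
noncomputable def wsum {A : Type*} (a : (A →₀ ℕ) → ℝ) (p : ℕ) (f : (A →₀ ℕ) → ℂ) : ℝ≥0∞ :=
  ∑' α, ENNReal.ofReal (‖f α‖ ^ 2 / (a α) ^ p)

/-- The weighted `ℓ²`-norm `‖f‖_p`, with values in `[0,∞]`. -/
noncomputable def wnorm {A : Type*} (a : (A →₀ ℕ) → ℝ) (p : ℕ) (f : (A →₀ ℕ) → ℂ) : ℝ≥0∞ :=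
  (wsum a p f) ^ (2⁻¹ : ℝ)

section AuxLemmas

section
variable {A : Type*} [DecidableEq A] {a : (A →₀ ℕ) → ℝ}

-- pointwise real Cauchy-Schwarz bound
lemma conv_pointwise (hpos : ∀ α, 0 < a α) (hsup : ∀ α β, a α * a β ≤ a (α + β))
    (d q : ℕ) (f g : (A →₀ ℕ) → ℂ) (γ : A →₀ ℕ) :
    ‖conv f g γ‖ ^ 2 / a γ ^ (q + d) ≤
      (∑ x ∈ Finset.HasAntidiagonal.antidiagonal γ, 1 / a x.1 ^ d) *
        ∑ x ∈ Finset.HasAntidiagonal.antidiagonal γ,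
          (‖f x.1‖ ^ 2 / a x.1 ^ q) * (‖g x.2‖ ^ 2 / a x.2 ^ (q + d)) := by
  set P := q + d with hP
  have haP : 0 < a γ ^ P := pow_pos (hpos γ) P
  have step1 : ‖conv f g γ‖ ≤ ∑ x ∈ Finset.HasAntidiagonal.antidiagonal γ, ‖f x.1‖ * ‖g x.2‖ := by
    refine (norm_sum_le _ _).trans (le_of_eq ?_)
    exact Finset.sum_congr rfl fun x _ => norm_mul _ _
  have step2 : ‖conv f g γ‖ ^ 2 ≤ (∑ x ∈ Finset.HasAntidiagonal.antidiagonal γ, ‖f x.1‖ * ‖g x.2‖) ^ 2 :=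
    pow_le_pow_left₀ (norm_nonneg _) step1 2
  -- Cauchy-Schwarz
  set u : (A →₀ ℕ) × (A →₀ ℕ) → ℝ := fun x => Real.sqrt (1 / a x.1 ^ d)
  set v : (A →₀ ℕ) × (A →₀ ℕ) → ℝ := fun x => Real.sqrt (a x.1 ^ d) * (‖f x.1‖ * ‖g x.2‖)
  have huv : ∀ x : (A →₀ ℕ) × (A →₀ ℕ), u x * v x = ‖f x.1‖ * ‖g x.2‖ := by
    intro x
    have h1 : (0:ℝ) < a x.1 ^ d := pow_pos (hpos _) d
    have : Real.sqrt (1 / a x.1 ^ d) * Real.sqrt (a x.1 ^ d) = 1 := by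
      rw [← Real.sqrt_mul (by positivity), one_div_mul_cancel h1.ne', Real.sqrt_one]
    simp only [u, v, ← mul_assoc, this, one_mul]
  have cs := Finset.sum_mul_sq_le_sq_mul_sq (Finset.HasAntidiagonal.antidiagonal γ) u v
  have hsum_eq : ∑ x ∈ Finset.HasAntidiagonal.antidiagonal γ, u x * v x
      = ∑ x ∈ Finset.HasAntidiagonal.antidiagonal γ, ‖f x.1‖ * ‖g x.2‖ :=
    Finset.sum_congr rfl fun x _ => huv x
  have hu2 : ∀ x : (A →₀ ℕ) × (A →₀ ℕ), u x ^ 2 = 1 / a x.1 ^ d := fun x =>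
    Real.sq_sqrt (one_div_nonneg.mpr (pow_pos (hpos _) d).le)
  have hv2 : ∀ x : (A →₀ ℕ) × (A →₀ ℕ),
      v x ^ 2 = a x.1 ^ d * (‖f x.1‖ * ‖g x.2‖) ^ 2 := fun x => by
    rw [mul_pow, Real.sq_sqrt (pow_pos (hpos _) d).le]
  have step3 : ‖conv f g γ‖ ^ 2 ≤
      (∑ x ∈ Finset.HasAntidiagonal.antidiagonal γ, 1 / a x.1 ^ d) *
        ∑ x ∈ Finset.HasAntidiagonal.antidiagonal γ, a x.1 ^ d * (‖f x.1‖ * ‖g x.2‖) ^ 2 := by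
    refine step2.trans ?_
    rw [← hsum_eq]
    refine cs.trans (le_of_eq ?_)
    congr 1
    · exact Finset.sum_congr rfl fun x _ => hu2 x
    · exact Finset.sum_congr rfl fun x _ => hv2 x
  -- divide by a γ ^ P
  have step4 : ∀ x ∈ Finset.HasAntidiagonal.antidiagonal γ,
      a x.1 ^ d * (‖f x.1‖ * ‖g x.2‖) ^ 2 / a γ ^ P ≤
        (‖f x.1‖ ^ 2 / a x.1 ^ q) * (‖g x.2‖ ^ 2 / a x.2 ^ P) := by
    intro x hx
    have hxy : x.1 + x.2 = γ := Finset.HasAntidiagonal.mem_antidiagonal.mp hx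
    have h1 : (0:ℝ) < a x.1 := hpos _
    have h2 : (0:ℝ) < a x.2 := hpos _
    have hle : a x.1 ^ P * a x.2 ^ P ≤ a γ ^ P := by
      rw [← mul_pow]
      exact pow_le_pow_left₀ (mul_nonneg h1.le h2.le) (hxy ▸ hsup x.1 x.2) P
    have : a x.1 ^ d * (‖f x.1‖ * ‖g x.2‖) ^ 2 / a γ ^ P ≤
        a x.1 ^ d * (‖f x.1‖ * ‖g x.2‖) ^ 2 / (a x.1 ^ P * a x.2 ^ P) :=
      div_le_div_of_nonneg_left (mul_nonneg (pow_pos h1 d).le (sq_nonneg _))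
        (mul_pos (pow_pos h1 P) (pow_pos h2 P)) hle
    refine this.trans (le_of_eq ?_)
    rw [hP, pow_add]
    field_simp
  calc ‖conv f g γ‖ ^ 2 / a γ ^ P
      ≤ ((∑ x ∈ Finset.HasAntidiagonal.antidiagonal γ, 1 / a x.1 ^ d) *
          ∑ x ∈ Finset.HasAntidiagonal.antidiagonal γ, a x.1 ^ d * (‖f x.1‖ * ‖g x.2‖) ^ 2) / a γ ^ P := by
        gcongr
    _ = (∑ x ∈ Finset.HasAntidiagonal.antidiagonal γ, 1 / a x.1 ^ d) *
          ∑ x ∈ Finset.HasAntidiagonal.antidiagonal γ, a x.1 ^ d * (‖f x.1‖ * ‖g x.2‖) ^ 2 / a γ ^ P := by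
        rw [mul_div_assoc, Finset.sum_div]
    _ ≤ _ := by
        refine mul_le_mul_of_nonneg_left (Finset.sum_le_sum step4) ?_
        exact Finset.sum_nonneg fun x _ => one_div_nonneg.mpr (pow_pos (hpos _) d).le

end

section
variable {A : Type*} [DecidableEq A] {a : (A →₀ ℕ) → ℝ}

lemma tsum_antidiagonal_aux (h : (A →₀ ℕ) × (A →₀ ℕ) → ℝ≥0∞) :
    ∑' γ : A →₀ ℕ, ∑ x ∈ Finset.HasAntidiagonal.antidiagonal γ, h x = ∑' x : (A →₀ ℕ) × (A →₀ ℕ), h x := by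
  rw [← (Equiv.sigmaFiberEquiv (fun x : (A →₀ ℕ) × (A →₀ ℕ) => x.1 + x.2)).tsum_eq h]
  rw [ENNReal.tsum_sigma']
  refine tsum_congr fun γ => Eq.symm ?_
  have hset : {x : (A →₀ ℕ) × (A →₀ ℕ) | x.1 + x.2 = γ} = ↑(Finset.HasAntidiagonal.antidiagonal γ) := by
    ext x; simp [Finset.HasAntidiagonal.mem_antidiagonal]
  calc ∑' (b : {x : (A →₀ ℕ) × (A →₀ ℕ) // x.1 + x.2 = γ}),
        h ((Equiv.sigmaFiberEquiv _) ⟨γ, b⟩)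
      = ∑' (b : ({x : (A →₀ ℕ) × (A →₀ ℕ) | x.1 + x.2 = γ} : Set _)), h ↑b := rfl
    _ = ∑' (b : (↑(Finset.HasAntidiagonal.antidiagonal γ) : Set ((A →₀ ℕ) × (A →₀ ℕ)))), h ↑b := by rw [hset]
    _ = ∑ x ∈ Finset.HasAntidiagonal.antidiagonal γ, h x := Finset.tsum_subtype _ h

lemma wsum_conv_le (hpos : ∀ α, 0 < a α) (hsup : ∀ α β, a α * a β ≤ a (α + β))
    (d q : ℕ) (f g : (A →₀ ℕ) → ℂ) :
    wsum a (q + d) (conv f g) ≤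
      (∑' α : A →₀ ℕ, ENNReal.ofReal (1 / a α ^ d)) * (wsum a q f * wsum a (q + d) g) := by
  set S' := ∑' α : A →₀ ℕ, ENNReal.ofReal (1 / a α ^ d) with hS'
  set F : (A →₀ ℕ) → ℝ≥0∞ := fun α => ENNReal.ofReal (‖f α‖ ^ 2 / a α ^ q) with hF
  set G : (A →₀ ℕ) → ℝ≥0∞ := fun β => ENNReal.ofReal (‖g β‖ ^ 2 / a β ^ (q + d)) with hG
  have hS : ∀ γ : A →₀ ℕ,
      ENNReal.ofReal (∑ x ∈ Finset.HasAntidiagonal.antidiagonal γ, 1 / a x.1 ^ d) ≤ S' := by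
    intro γ
    rw [ENNReal.ofReal_sum_of_nonneg
      (fun x _ => one_div_nonneg.mpr (pow_pos (hpos _) d).le)]
    have hinj : ∀ x ∈ Finset.HasAntidiagonal.antidiagonal γ, ∀ y ∈ Finset.HasAntidiagonal.antidiagonal γ,
        x.1 = y.1 → x = y := by
      intro x hx y hy hxy
      have hx' := Finset.HasAntidiagonal.mem_antidiagonal.mp hx
      have hy' := Finset.HasAntidiagonal.mem_antidiagonal.mp hy
      have : x.2 = y.2 := by
        apply add_left_cancel (a := x.1)
        rw [hx', hxy, hy']
      exact Prod.ext hxy this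
    calc ∑ x ∈ Finset.HasAntidiagonal.antidiagonal γ, ENNReal.ofReal (1 / a x.1 ^ d)
        = ∑ α ∈ (Finset.HasAntidiagonal.antidiagonal γ).image Prod.fst, ENNReal.ofReal (1 / a α ^ d) :=
          (Finset.sum_image (f := fun α => ENNReal.ofReal (1 / a α ^ d)) hinj).symm
      _ ≤ S' := ENNReal.sum_le_tsum _
  have key : ∀ γ : A →₀ ℕ,
      ENNReal.ofReal (‖conv f g γ‖ ^ 2 / a γ ^ (q + d)) ≤
        S' * ∑ x ∈ Finset.HasAntidiagonal.antidiagonal γ, F x.1 * G x.2 := by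
    intro γ
    refine (ENNReal.ofReal_le_ofReal (conv_pointwise hpos hsup d q f g γ)).trans ?_
    rw [ENNReal.ofReal_mul (Finset.sum_nonneg fun x _ =>
      one_div_nonneg.mpr (pow_pos (hpos _) d).le)]
    refine mul_le_mul' (hS γ) (le_of_eq ?_)
    rw [ENNReal.ofReal_sum_of_nonneg (fun x _ => mul_nonneg
      (div_nonneg (sq_nonneg _) (pow_pos (hpos _) q).le)
      (div_nonneg (sq_nonneg _) (pow_pos (hpos _) (q + d)).le))]
    exact Finset.sum_congr rfl fun x _ =>
      ENNReal.ofReal_mul (div_nonneg (sq_nonneg _) (pow_pos (hpos _) q).le)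
  calc wsum a (q + d) (conv f g)
      ≤ ∑' γ : A →₀ ℕ, S' * ∑ x ∈ Finset.HasAntidiagonal.antidiagonal γ, F x.1 * G x.2 :=
        ENNReal.tsum_le_tsum key
    _ = S' * ∑' γ : A →₀ ℕ, ∑ x ∈ Finset.HasAntidiagonal.antidiagonal γ, F x.1 * G x.2 :=
        ENNReal.tsum_mul_left
    _ = S' * ∑' x : (A →₀ ℕ) × (A →₀ ℕ), F x.1 * G x.2 := by
        rw [tsum_antidiagonal_aux (fun x => F x.1 * G x.2)]
    _ = S' * (wsum a q f * wsum a (q + d) g) := by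
        have h2 : ∑' x : (A →₀ ℕ) × (A →₀ ℕ), F x.1 * G x.2
            = (∑' α, F α) * ∑' β, G β := by
          calc ∑' x : (A →₀ ℕ) × (A →₀ ℕ), F x.1 * G x.2
              = ∑' (α) (β), F α * G β := ENNReal.tsum_prod (f := fun α β => F α * G β)
            _ = ∑' α, F α * ∑' β, G β := by
                exact tsum_congr fun α => ENNReal.tsum_mul_left
            _ = (∑' α, F α) * ∑' β, G β := ENNReal.tsum_mul_right
        rw [h2]; rfl

end

section
variable {A : Type*} [DecidableEq A] {a : (A →₀ ℕ) → ℝ}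

lemma one_le_weight (h0 : a 0 = 1) (hgen : ∀ n : A, 1 < a (Finsupp.single n 1))
    (hsup : ∀ α β : A →₀ ℕ, a α * a β ≤ a (α + β)) (hpos : ∀ α, 0 < a α) :
    ∀ α, 1 ≤ a α := by
  have hsingle : ∀ (n : A) (b : ℕ), 1 ≤ a (Finsupp.single n b) := by
    intro n b
    induction b with
    | zero => simp [h0]
    | succ k ih =>
      have he : Finsupp.single n (k + 1) = Finsupp.single n k + Finsupp.single n 1 := by
        rw [← Finsupp.single_add]
      rw [he]
      calc (1:ℝ) ≤ a (Finsupp.single n k) * a (Finsupp.single n 1) := by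
            nlinarith [hgen n, hpos (Finsupp.single n k)]
        _ ≤ _ := hsup _ _
  intro α
  induction α using Finsupp.induction with
  | zero => simp [h0]
  | single_add n b g _ _ ih =>
    calc (1:ℝ) ≤ a (Finsupp.single n b) * a g := by
          nlinarith [hsingle n b, hpos g]
      _ ≤ _ := hsup _ _

lemma one_lt_weight (h0 : a 0 = 1) (hgen : ∀ n : A, 1 < a (Finsupp.single n 1))
    (hsup : ∀ α β : A →₀ ℕ, a α * a β ≤ a (α + β)) (hpos : ∀ α, 0 < a α)
    {α : A →₀ ℕ} (hα : α ≠ 0) : 1 < a α := by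
  have h1 := one_le_weight h0 hgen hsup hpos
  obtain ⟨n, hn⟩ : ∃ n, α n ≠ 0 := by
    by_contra h
    push_neg at h
    exact hα (Finsupp.ext h)
  have hle : Finsupp.single n 1 ≤ α := Finsupp.single_le_iff.mpr (Nat.one_le_iff_ne_zero.mpr hn)
  have heq : Finsupp.single n 1 + (α - Finsupp.single n 1) = α := add_tsub_cancel_of_le hle
  calc (1:ℝ) < a (Finsupp.single n 1) := hgen n
    _ ≤ a (Finsupp.single n 1) * a (α - Finsupp.single n 1) := by
        nlinarith [h1 (α - Finsupp.single n 1), hpos (Finsupp.single n 1)]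
    _ ≤ a (Finsupp.single n 1 + (α - Finsupp.single n 1)) := hsup _ _
    _ = a α := by rw [heq]

lemma wsum_delta (h0 : a 0 = 1) (p : ℕ) :
    wsum a p (fun γ : A →₀ ℕ => if γ = 0 then 1 else 0) = 1 := by
  unfold wsum
  rw [tsum_eq_single 0]
  · simp [h0]
  · intro b hb
    simp [hb]

set_option maxHeartbeats 1000000 in
lemma exists_good_exponent (h0 : a 0 = 1) (hgen : ∀ n : A, 1 < a (Finsupp.single n 1))
    (hsup : ∀ α β : A →₀ ℕ, a α * a β ≤ a (α + β)) (hpos : ∀ α, 0 < a α)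
    (f : (A →₀ ℕ) → ℂ) (p₀ : ℕ) (hf : wsum a p₀ f ≠ ⊤) {ε : ℝ} (hε : 0 < ε) :
    ∃ q, p₀ ≤ q ∧ wsum a q f ≤ ENNReal.ofReal (‖f 0‖ ^ 2 + ε) := by
  have h1 := one_le_weight h0 hgen hsup hpos
  set G : ℕ → (A →₀ ℕ) → ℝ≥0∞ := fun p α => ENNReal.ofReal (‖f α‖ ^ 2 / a α ^ p) with hG
  have htail := ENNReal.tendsto_tsum_compl_atTop_zero (f := G p₀) hf
  have hhalf : (0:ℝ≥0∞) < ENNReal.ofReal (ε / 2) := ENNReal.ofReal_pos.mpr (half_pos hε)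
  obtain ⟨s₁, hs₁⟩ := Filter.eventually_atTop.mp (htail.eventually_lt_const hhalf)
  set s : Finset (A →₀ ℕ) := insert 0 s₁ with hs
  have htails : ∑' x : {x : A →₀ ℕ // x ∉ s}, G p₀ x < ENNReal.ofReal (ε / 2) :=
    hs₁ s (Finset.subset_insert _ _)
  -- head tendsto
  set T : ℕ → ℝ := fun q => ∑ α ∈ s.erase 0, ‖f α‖ ^ 2 / a α ^ q with hT
  have htendT : Filter.Tendsto T Filter.atTop (nhds 0) := by
    have : Filter.Tendsto (fun q => ∑ α ∈ s.erase 0, ‖f α‖ ^ 2 / a α ^ q)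
        Filter.atTop (nhds (∑ α ∈ s.erase 0, (0:ℝ))) := by
      refine tendsto_finset_sum _ fun α hα => ?_
      have hα0 : α ≠ 0 := Finset.ne_of_mem_erase hα
      have hlt : 1 < a α := one_lt_weight h0 hgen hsup hpos hα0
      have heq : (fun q : ℕ => ‖f α‖ ^ 2 / a α ^ q)
          = fun q : ℕ => ‖f α‖ ^ 2 * ((a α)⁻¹) ^ q := by
        funext q; rw [div_eq_mul_inv, inv_pow]
      rw [heq]
      simpa using (tendsto_pow_atTop_nhds_zero_of_lt_one
        (inv_nonneg.mpr (hpos α).le) (inv_lt_one_of_one_lt₀ hlt)).const_mul (‖f α‖ ^ 2)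
    simpa using this
  obtain ⟨q, hTq, hq⟩ :=
    ((htendT.eventually_lt_const (half_pos hε)).and (Filter.eventually_ge_atTop p₀)).exists
  refine ⟨q, hq, ?_⟩
  have hw : wsum a q f = ∑' α, G q α := rfl
  have hsplit' := Summable.tsum_add_tsum_compl (s := (↑s : Set (A →₀ ℕ))) (f := G q)
    ENNReal.summable ENNReal.summable
  have hfin : ∑' x : (↑s : Set (A →₀ ℕ)), G q x = ∑ α ∈ s, G q α :=
    Finset.tsum_subtype s (G q)
  have hcompl : ∑' x : ((↑s : Set (A →₀ ℕ))ᶜ : Set (A →₀ ℕ)), G q x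
      = ∑' x : {x : A →₀ ℕ // x ∉ s}, G q x := rfl
  have hsplit : wsum a q f
      = ∑ α ∈ s, G q α + ∑' x : {x : A →₀ ℕ // x ∉ s}, G q x := by
    rw [hw, ← hsplit', hfin, hcompl]
  have htail_le : ∑' x : {x : A →₀ ℕ // x ∉ s}, G q x
      ≤ ∑' x : {x : A →₀ ℕ // x ∉ s}, G p₀ x := by
    refine ENNReal.tsum_le_tsum fun x => ?_
    refine ENNReal.ofReal_le_ofReal ?_
    exact div_le_div_of_nonneg_left (sq_nonneg _) (pow_pos (hpos _) p₀)
      (pow_le_pow_right₀ (h1 _) hq)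
  have hhead : ∑ α ∈ s, G q α
      = G q 0 + ∑ α ∈ s.erase 0, G q α :=
    (Finset.add_sum_erase s (G q) (Finset.mem_insert_self 0 s₁)).symm
  have hG0 : G q 0 = ENNReal.ofReal (‖f 0‖ ^ 2) := by simp [hG, h0]
  have herase : ∑ α ∈ s.erase 0, G q α ≤ ENNReal.ofReal (ε / 2) := by
    rw [hG, ← ENNReal.ofReal_sum_of_nonneg
      (fun α _ => div_nonneg (sq_nonneg _) (pow_pos (hpos _) q).le)]
    exact ENNReal.ofReal_le_ofReal hTq.le
  calc wsum a q f = ∑ α ∈ s, G q α + ∑' x : {x : A →₀ ℕ // x ∉ s}, G q x := hsplit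
    _ ≤ (ENNReal.ofReal (‖f 0‖ ^ 2) + ENNReal.ofReal (ε / 2)) + ENNReal.ofReal (ε / 2) := by
        refine add_le_add ?_ (htail_le.trans htails.le)
        rw [hhead, hG0]
        exact add_le_add_right herase _
    _ = ENNReal.ofReal (‖f 0‖ ^ 2 + ε) := by
        rw [← ENNReal.ofReal_add (sq_nonneg _) (half_pos hε).le,
          ← ENNReal.ofReal_add (by positivity) (half_pos hε).le]
        ring_nf

end

section
variable {A : Type*} [DecidableEq A] {a : (A →₀ ℕ) → ℝ}

lemma wnorm_convPow_le (hpos : ∀ α, 0 < a α) (h0 : a 0 = 1)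
    (hsup : ∀ α β, a α * a β ≤ a (α + β)) (d q : ℕ) (f : (A →₀ ℕ) → ℂ) (n : ℕ) :
    wnorm a (q + d) (convPow f n) ≤
      ((∑' α : A →₀ ℕ, ENNReal.ofReal (1 / a α ^ d)) ^ (2⁻¹ : ℝ) * wnorm a q f) ^ n := by
  set S' := ∑' α : A →₀ ℕ, ENNReal.ofReal (1 / a α ^ d) with hS'
  induction n with
  | zero =>
    show wnorm a (q + d) (fun γ => if γ = 0 then 1 else 0) ≤ _
    rw [pow_zero, wnorm, wsum_delta h0, ENNReal.one_rpow]
  | succ k ih =>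
    have h2 : (0:ℝ) ≤ 2⁻¹ := by norm_num
    calc wnorm a (q + d) (convPow f (k + 1))
        = (wsum a (q + d) (conv f (convPow f k))) ^ (2⁻¹ : ℝ) := rfl
      _ ≤ (S' * (wsum a q f * wsum a (q + d) (convPow f k))) ^ (2⁻¹ : ℝ) :=
          ENNReal.rpow_le_rpow (wsum_conv_le hpos hsup d q f (convPow f k)) h2
      _ = S' ^ (2⁻¹ : ℝ) * (wnorm a q f * wnorm a (q + d) (convPow f k)) := by
          rw [ENNReal.mul_rpow_of_nonneg _ _ h2, ENNReal.mul_rpow_of_nonneg _ _ h2]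
          rfl
      _ ≤ S' ^ (2⁻¹ : ℝ) * (wnorm a q f * (S' ^ (2⁻¹ : ℝ) * wnorm a q f) ^ k) := by
          gcongr
      _ = (S' ^ (2⁻¹ : ℝ) * wnorm a q f) ^ (k + 1) := by ring

end

end AuxLemmas

/-- Power series with radius of convergence `R` can be evaluated (absolutely, in some
weighted norm `‖·‖_p`) at any `f` whose generalized expectation satisfies
`|f 0| < R / A_d`, where `A_d = (∑_α a α ^ (-d))^{1/2}`. -/
theorem powerSeries_eval_summable {A : Type*} [DecidableEq A]
    (d : ℕ) (hd : 1 ≤ d) (a : (A →₀ ℕ) → ℝ)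
    (hpos : ∀ α, 0 < a α)
    (h0 : a 0 = 1)
    (hgen : ∀ n : A, 1 < a (Finsupp.single n 1))
    (hreg : Summable fun n : A => 1 / ((a (Finsupp.single n 1)) ^ d - 1))
    (hsup : ∀ α β : A →₀ ℕ, a α * a β ≤ a (α + β))
    (R : ℝ) (hR : 0 < R) (φ : ℕ → ℂ)
    (hφ : ∀ r : ℝ, 0 < r → r < R → Summable fun n : ℕ => ‖φ n‖ * r ^ n)
    (f : (A →₀ ℕ) → ℂ) (p₀ : ℕ) (hf : wnorm a p₀ f < ⊤)
    (hf0 : ‖f 0‖ < R / Real.sqrt (∑' α : A →₀ ℕ, 1 / (a α) ^ d)) :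
    ∃ p : ℕ, (∑' n : ℕ, ENNReal.ofReal (‖φ n‖) * wnorm a p (convPow f n)) < ⊤ := by
  classical
  -- summability of the weights
  have hsumm : Summable (fun α : A →₀ ℕ => 1 / a α ^ d) := by
    by_contra h
    rw [tsum_eq_zero_of_not_summable h, Real.sqrt_zero, div_zero] at hf0
    exact absurd hf0 (not_lt.mpr (norm_nonneg _))
  set Sr := ∑' α : A →₀ ℕ, 1 / a α ^ d with hSr
  have hSrpos : 0 < Sr :=
    Summable.tsum_pos hsumm (fun α => (div_nonneg one_pos.le (pow_pos (hpos α) d).le)) 0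
      (div_pos one_pos (pow_pos (hpos 0) d))
  have hSenn : (∑' α : A →₀ ℕ, ENNReal.ofReal (1 / a α ^ d)) = ENNReal.ofReal Sr :=
    (ENNReal.ofReal_tsum_of_nonneg
      (fun α => div_nonneg one_pos.le (pow_pos (hpos α) d).le) hsumm).symm
  set sq := Real.sqrt Sr with hsqdef
  have hsq : 0 < sq := Real.sqrt_pos.mpr hSrpos
  -- the target radius
  set c : ℝ := (‖f 0‖ + R / sq) / 2 with hc
  have hfRsq : ‖f 0‖ < R / sq := hf0
  have hc1 : ‖f 0‖ < c := by rw [hc]; linarith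
  have hc2 : c < R / sq := by rw [hc]; linarith
  have hcpos : 0 < c := lt_of_le_of_lt (norm_nonneg _) hc1
  have hrR : sq * c < R := by
    have := mul_lt_mul_of_pos_left hc2 hsq
    rwa [mul_div_cancel₀ _ hsq.ne'] at this
  have hr0 : 0 < sq * c := mul_pos hsq hcpos
  -- choose the exponent
  have hwtop : wsum a p₀ f ≠ ⊤ := by
    intro htop
    rw [wnorm, htop, ENNReal.top_rpow_of_pos (by norm_num)] at hf
    exact absurd hf (lt_irrefl _)
  have hε : 0 < c ^ 2 - ‖f 0‖ ^ 2 := by nlinarith [norm_nonneg (f 0)]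
  obtain ⟨q, hq, hwq⟩ := exists_good_exponent h0 hgen hsup hpos f p₀ hwtop hε
  have hwq' : wsum a q f ≤ ENNReal.ofReal (c ^ 2) := by
    refine hwq.trans (le_of_eq ?_)
    congr 1; ring
  -- bound K
  set S' := ∑' α : A →₀ ℕ, ENNReal.ofReal (1 / a α ^ d) with hS'
  have hKsq : S' ^ (2⁻¹ : ℝ) = ENNReal.ofReal sq := by
    rw [hSenn, ENNReal.ofReal_rpow_of_nonneg hSrpos.le (by norm_num : (0:ℝ) ≤ 2⁻¹)]
    congr 1
    rw [hsqdef, Real.sqrt_eq_rpow]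
    norm_num
  have hwc : wnorm a q f ≤ ENNReal.ofReal c := by
    rw [wnorm]
    calc (wsum a q f) ^ (2⁻¹ : ℝ) ≤ (ENNReal.ofReal (c ^ 2)) ^ (2⁻¹ : ℝ) :=
          ENNReal.rpow_le_rpow hwq' (by norm_num)
      _ = ENNReal.ofReal ((c ^ 2) ^ (2⁻¹ : ℝ)) :=
          ENNReal.ofReal_rpow_of_nonneg (sq_nonneg _) (by norm_num)
      _ = ENNReal.ofReal c := by
          congr 1
          rw [← Real.rpow_natCast c 2, ← Real.rpow_mul hcpos.le]
          norm_num
  have hK : S' ^ (2⁻¹ : ℝ) * wnorm a q f ≤ ENNReal.ofReal (sq * c) := by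
    rw [hKsq, ENNReal.ofReal_mul hsq.le]
    exact mul_le_mul_right hwc _
  -- conclude
  refine ⟨q + d, ?_⟩
  have hsummφ := hφ (sq * c) hr0 hrR
  calc ∑' n : ℕ, ENNReal.ofReal (‖φ n‖) * wnorm a (q + d) (convPow f n)
      ≤ ∑' n : ℕ, ENNReal.ofReal (‖φ n‖) * (ENNReal.ofReal (sq * c)) ^ n := by
        refine ENNReal.tsum_le_tsum fun n => mul_le_mul_right ?_ _
        exact (wnorm_convPow_le hpos h0 hsup d q f n).trans (pow_le_pow_left' hK n)
    _ = ∑' n : ℕ, ENNReal.ofReal (‖φ n‖ * (sq * c) ^ n) := by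
        refine tsum_congr fun n => ?_
        rw [← ENNReal.ofReal_pow hr0.le, ← ENNReal.ofReal_mul (norm_nonneg _)]
    _ = ENNReal.ofReal (∑' n : ℕ, ‖φ n‖ * (sq * c) ^ n) :=
        (ENNReal.ofReal_tsum_of_nonneg
          (fun n => mul_nonneg (norm_nonneg _) (pow_nonneg hr0.le n)) hsummφ).symm
    _ < ⊤ := ENNReal.ofReal_lt_top
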